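/- Let Z be a binary K×N matrix and Z' an extension of Z obtained by adding one new row containing exactly one 1. Under the IBP probability mass function P[· | α], the ratio satisfies P[Z | α] / P[Z' | α] ≤ (K+1) N / α; in particular, sup over such pairs of (1/N)·P[Z|α]/P[Z'|α] is bounded as N → ∞. -/

import Mathlib

open Finset

/-- Number of ones in row `k` of the binary matrix `Z`. -/
def rowCount {K N : ℕ} (Z : Fin K → Fin N → Bool) (k : Fin K) : ℕ :=
  (Finset.univ.filter (fun n => Z k n = true)).card

/-- The IBP exchangeable feature probability function
`P[Z | α] = (α^K e^{-α H_N} / ∏_h K_h!) · ∏_k (N−m_k)!(m_k−1)!/N!`,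
where the first product ranges over the `2^N − 1` nonzero histories `h` and `K_h` is the
number of rows of `Z` equal to `h`. -/
noncomputable def ibpEFPF {K N : ℕ} (α : ℝ) (Z : Fin K → Fin N → Bool) : ℝ :=
  (α ^ K * Real.exp (-α * ∑ n ∈ Finset.range N, (1 : ℝ) / (n + 1))
      / ∏ h ∈ (Finset.univ : Finset (Fin N → Bool)).erase (fun _ => false),
          (Nat.factorial ((Finset.univ.filter (fun k => Z k = h)).card) : ℝ))
    * ∏ k : Fin K,
        ((Nat.factorial (N - rowCount Z k) : ℝ) * (Nat.factorial (rowCount Z k - 1))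
          / Nat.factorial N)

theorem ibp_ratio_bound {K N : ℕ} (hN : 1 ≤ N) (α : ℝ) (hα : 0 < α)
    (Z : Fin K → Fin N → Bool) (hZ : ∀ k, 1 ≤ rowCount Z k)
    (Z' : Fin (K + 1) → Fin N → Bool)
    (hext : ∀ k : Fin K, Z' k.castSucc = Z k)
    (hnew : ∃ j : Fin N, ∀ n : Fin N, Z' (Fin.last K) n = decide (n = j)) :
    ibpEFPF α Z / ibpEFPF α Z' ≤ (K + 1) * N / α ∧
    (1 / (N : ℝ)) * (ibpEFPF α Z / ibpEFPF α Z') ≤ (K + 1) / α := by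
  obtain ⟨j, hj⟩ := hnew
  set h₀ : Fin N → Bool := fun n => decide (n = j) with hh₀
  have hlast : Z' (Fin.last K) = h₀ := funext hj
  set c : ℕ := (Finset.univ.filter (fun k : Fin K => Z k = h₀)).card with hc
  have hcK : c ≤ K := by
    calc c ≤ (Finset.univ : Finset (Fin K)).card := Finset.card_filter_le _ _
    _ = K := by simp
  -- row counts
  have hrc : ∀ k : Fin K, rowCount Z' k.castSucc = rowCount Z k := by
    intro k; unfold rowCount; rw [hext]
  have hrclast : rowCount Z' (Fin.last K) = 1 := by
    unfold rowCount
    rw [hlast]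
    simp [hh₀, Finset.filter_eq']
  -- numbers
  have hNpos : (0:ℝ) < N := by exact_mod_cast hN
  have hNne : (N:ℝ) ≠ 0 := ne_of_gt hNpos
  -- Q product
  have hQ : (∏ k : Fin (K+1),
      ((Nat.factorial (N - rowCount Z' k) : ℝ) * (Nat.factorial (rowCount Z' k - 1))
        / Nat.factorial N))
      = (∏ k : Fin K,
      ((Nat.factorial (N - rowCount Z k) : ℝ) * (Nat.factorial (rowCount Z k - 1))
        / Nat.factorial N)) * (1 / N) := by
    rw [Fin.prod_univ_castSucc]
    congr 1
    · exact Finset.prod_congr rfl fun k _ => by rw [hrc]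
    · rw [hrclast]
      have : (N:ℕ) * Nat.factorial (N-1) = Nat.factorial N := Nat.mul_factorial_pred (Nat.one_le_iff_ne_zero.mp hN)
      have h2 : (N:ℝ) * (Nat.factorial (N-1) : ℝ) = (Nat.factorial N : ℝ) := by
        exact_mod_cast this
      have hfne : (Nat.factorial N : ℝ) ≠ 0 := by positivity
      simp only [Nat.sub_self, Nat.factorial_zero, Nat.cast_one, mul_one]
      field_simp
      linarith [h2]
  -- multiplicity counts
  have hcnt : ∀ h : Fin N → Bool,
      ((Finset.univ.filter (fun k : Fin (K+1) => Z' k = h)).card : ℕ)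
        = (Finset.univ.filter (fun k : Fin K => Z k = h)).card + (if h₀ = h then 1 else 0) := by
    intro h
    rw [Finset.card_filter, Finset.card_filter, Fin.sum_univ_castSucc]
    congr 1
    · exact Finset.sum_congr rfl fun k _ => by rw [hext]
    · rw [hlast]
  -- the erased set and membership of h₀
  set S := (Finset.univ : Finset (Fin N → Bool)).erase (fun _ => false) with hS
  have hmem : h₀ ∈ S := by
    refine Finset.mem_erase.mpr ⟨?_, Finset.mem_univ _⟩
    intro heq
    have := congrFun heq j
    simp [hh₀] at this
  -- P product
  have hP : (∏ h ∈ S, (Nat.factorial ((Finset.univ.filter (fun k : Fin (K+1) => Z' k = h)).card) : ℝ))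
      = (∏ h ∈ S, (Nat.factorial ((Finset.univ.filter (fun k : Fin K => Z k = h)).card) : ℝ)) * (c + 1) := by
    rw [← Finset.mul_prod_erase S _ hmem, ← Finset.mul_prod_erase S
      (fun h => (Nat.factorial ((Finset.univ.filter (fun k : Fin K => Z k = h)).card) : ℝ)) hmem]
    have h1 : ((Finset.univ.filter (fun k : Fin (K+1) => Z' k = h₀)).card) = c + 1 := by
      rw [hcnt]; simp [hc]
    have h2 : ∀ h ∈ S.erase h₀,
        ((Finset.univ.filter (fun k : Fin (K+1) => Z' k = h)).card)
        = (Finset.univ.filter (fun k : Fin K => Z k = h)).card := by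
      intro h hh
      have hne : h₀ ≠ h := (Finset.ne_of_mem_erase hh).symm
      rw [hcnt]; simp [hne]
    rw [h1, Finset.prod_congr rfl (fun h hh => by rw [h2 h hh])]
    rw [Nat.factorial_succ]
    push_cast
    ring
  -- positivity pieces
  have hPpos : (0:ℝ) < ∏ h ∈ S, (Nat.factorial ((Finset.univ.filter (fun k : Fin K => Z k = h)).card) : ℝ) := by
    apply Finset.prod_pos
    intro h _
    exact_mod_cast Nat.factorial_pos _
  have hZpos : 0 < ibpEFPF α Z := by
    unfold ibpEFPF
    apply mul_pos
    · apply div_pos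
      · positivity
      · exact hPpos
    · apply Finset.prod_pos
      intro k _
      apply div_pos
      · positivity
      · exact_mod_cast Nat.factorial_pos N
  -- key identity
  have hkey : ibpEFPF α Z' = ibpEFPF α Z * α / ((c + 1) * N) := by
    unfold ibpEFPF
    rw [hQ, hP]
    rw [pow_succ]
    have hc1 : ((c:ℝ) + 1) ≠ 0 := by positivity
    field_simp
    ring
  have hratio : ibpEFPF α Z / ibpEFPF α Z' = (c + 1) * N / α := by
    rw [hkey]
    have hZne : ibpEFPF α Z ≠ 0 := ne_of_gt hZpos
    have hc1 : ((c:ℝ) + 1) ≠ 0 := by positivity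
    field_simp
  have hb1 : ibpEFPF α Z / ibpEFPF α Z' ≤ (K + 1) * N / α := by
    rw [hratio]
    gcongr
  refine ⟨hb1, ?_⟩
  rw [hratio]
  have hcast : ((c:ℝ) + 1) ≤ (K:ℝ) + 1 := by exact_mod_cast Nat.succ_le_succ hcK
  have heq : (1 / (N:ℝ)) * ((c + 1) * N / α) = (c+1)/α := by field_simp
  rw [heq]
  gcongr
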